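/- Let Z = (Z_1,…,Z_d) be a vector of positive reals, C the edge weight matrix of a DAG, and B its Kleene star. Then X := Z ⊙ B is the unique solution of the max-linear structural equation system X = X ⊙ C ∨ Z. -/
import Mathlib


open Matrix Finset MeasureTheory ProbabilityTheory Filter

noncomputable section

/-- Max-times (tropical) matrix product: `(F ⊙ G) i j = ⋁ k, F i k * G k j`. -/
def mOdot {m n p : ℕ} (F : Matrix (Fin m) (Fin n) NNReal) (G : Matrix (Fin n) (Fin p) NNReal) :
    Matrix (Fin m) (Fin p) NNReal :=
  Matrix.of fun i j => Finset.univ.sup fun k => F i k * G k j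

/-- Entrywise maximum of two matrices. -/
def mSup {m n : ℕ} (A B : Matrix (Fin m) (Fin n) NNReal) : Matrix (Fin m) (Fin n) NNReal :=
  Matrix.of fun i j => A i j ⊔ B i j

/-- Max-times power: `A^{⊙0} = I`, `A^{⊙(k+1)} = A^{⊙k} ⊙ A`. -/
def mPow {d : ℕ} (A : Matrix (Fin d) (Fin d) NNReal) : ℕ → Matrix (Fin d) (Fin d) NNReal
  | 0 => 1
  | k + 1 => mOdot (mPow A k) A

/-- Kleene star: `B = ⋁_{k=0}^{d-1} C^{⊙k}`. -/
def kleene {d : ℕ} (C : Matrix (Fin d) (Fin d) NNReal) : Matrix (Fin d) (Fin d) NNReal :=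
  Matrix.of fun i j => (Finset.range d).sup fun k => mPow C k i j

/-- `IsWalk C i j l` : `l` is the list of vertices after `i` of a walk from `i` to `j`
    along positive entries of `C`. -/
def IsWalk {d : ℕ} (C : Matrix (Fin d) (Fin d) NNReal) : Fin d → Fin d → List (Fin d) → Prop
  | i, j, [] => i = j
  | i, j, k :: l => 0 < C i k ∧ IsWalk C k j l

/-- Deterministic path weight: product of edge weights along a walk. -/
def walkWeight {d : ℕ} (C : Matrix (Fin d) (Fin d) NNReal) : Fin d → List (Fin d) → NNReal
  | _, [] => 1
  | i, k :: l => C i k * walkWeight C k l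

/-- Acyclicity: the only walk from a vertex to itself is the empty one. -/
def Acyclic {d : ℕ} (C : Matrix (Fin d) (Fin d) NNReal) : Prop :=
  ∀ i l, IsWalk C i i l → l = []

/-- Non-noisy ML coefficient: maximal deterministic path weight from `j` to `i`
    (`1` on the diagonal; `0` if there is no path). -/
def detB {d : ℕ} (C : Matrix (Fin d) (Fin d) NNReal) (j i : Fin d) : NNReal :=
  sSup {w | ∃ l, IsWalk C j i l ∧ w = walkWeight C j l}

/-- Noisy path weight (without the initial noise factor `ε j`):
    `∏_l c_{k_l k_{l+1}} ε_{k_{l+1}}` along a walk. -/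
def noisyWeight {d : ℕ} (C : Matrix (Fin d) (Fin d) NNReal) (ε : Fin d → NNReal) :
    Fin d → List (Fin d) → NNReal
  | _, [] => 1
  | i, k :: l => C i k * ε k * noisyWeight C ε k l

/-- Random (noisy) ML coefficient `b̄_{ji}`: maximal random path weight
    `d̄_{ji}(p) = ε_j ∏ c ε` from `j` to `i`; equals `ε j` on the diagonal,
    `0` if `j` is not an ancestor of `i`. -/
def barB {d : ℕ} (C : Matrix (Fin d) (Fin d) NNReal) (ε : Fin d → NNReal) (j i : Fin d) :
    NNReal :=
  sSup {w | ∃ l, IsWalk C j i l ∧ w = ε j * noisyWeight C ε j l}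

/-- `j` is a strict ancestor of `i` (there exists a nonempty path). -/
def Reach {d : ℕ} (C : Matrix (Fin d) (Fin d) NNReal) (j i : Fin d) : Prop :=
  ∃ l, l ≠ [] ∧ IsWalk C j i l

/-- Max-times product of a row vector with a matrix. -/
def vOdot {d : ℕ} (x : Fin d → NNReal) (A : Matrix (Fin d) (Fin d) NNReal) : Fin d → NNReal :=
  fun j => Finset.univ.sup fun k => x k * A k j

/-- Componentwise maximum of two vectors. -/
def vSup {d : ℕ} (x y : Fin d → NNReal) : Fin d → NNReal := fun i => x i ⊔ y i

/-- Maximum of `f k` over all `k` satisfying `P` (0 if there is none). -/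
def supOver {d : ℕ} (P : Fin d → Prop) (f : Fin d → NNReal) : NNReal :=
  sSup {w | ∃ k, P k ∧ w = f k}

end

section helpers

lemma sup_mul_right' {α : Type*} (s : Finset α) (f : α → NNReal) (a : NNReal) :
    s.sup f * a = s.sup (fun x => f x * a) :=
  Finset.comp_sup_eq_sup_comp (· * a)
    (fun x y => Monotone.map_sup (f := fun z => z * a) (fun u v h => mul_le_mul_left h a) x y)
    (by simp)

lemma sup_mul_left' {α : Type*} (s : Finset α) (f : α → NNReal) (a : NNReal) :
    a * s.sup f = s.sup (fun x => a * f x) :=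
  Finset.comp_sup_eq_sup_comp (a * ·)
    (fun x y => Monotone.map_sup (f := fun z => a * z) (fun u v h => mul_le_mul_right h a) x y)
    (by simp)

lemma sup_shift (n : ℕ) (f : ℕ → NNReal) :
    ((Finset.range n).sup fun k => f (k + 1)) ⊔ f 0 = (Finset.range (n + 1)).sup f := by
  induction n with
  | zero => simp
  | succ n ih =>
    rw [Finset.range_add_one, Finset.sup_insert, Finset.range_add_one (n := n+1), Finset.sup_insert,
      sup_assoc, ih]

variable {d : ℕ}

lemma vOdot_one (x : Fin d → NNReal) : vOdot x 1 = x := by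
  funext j
  apply le_antisymm
  · exact Finset.sup_le fun k _ => by
      by_cases h : k = j
      · subst h; simp [Matrix.one_apply]
      · simp [Matrix.one_apply, h]
  · have h := Finset.le_sup (f := fun k => x k * (1 : Matrix (Fin d) (Fin d) NNReal) k j)
      (Finset.mem_univ j)
    simp only [Matrix.one_apply_eq, mul_one] at h
    exact h

lemma vOdot_zero (x : Fin d → NNReal) : vOdot x 0 = 0 := by
  funext j; simp [vOdot]

lemma vOdot_assoc (x : Fin d → NNReal) (A M : Matrix (Fin d) (Fin d) NNReal) :
    vOdot (vOdot x A) M = vOdot x (mOdot A M) := by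
  funext j
  unfold vOdot mOdot
  simp only [Matrix.of_apply]
  calc (Finset.univ.sup fun k => (Finset.univ.sup fun m => x m * A m k) * M k j)
      = Finset.univ.sup fun k => Finset.univ.sup fun m => x m * (A m k * M k j) := by
        refine Finset.sup_congr rfl fun k _ => ?_
        rw [sup_mul_right']; simp [mul_assoc]
    _ = Finset.univ.sup fun m => Finset.univ.sup fun k => x m * (A m k * M k j) :=
        Finset.sup_comm _ _ _
    _ = Finset.univ.sup fun m => x m * Finset.univ.sup fun k => A m k * M k j := by
        refine Finset.sup_congr rfl fun m _ => ?_
        rw [sup_mul_left']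

lemma vOdot_vSup (a b : Fin d → NNReal) (M : Matrix (Fin d) (Fin d) NNReal) :
    vOdot (vSup a b) M = vSup (vOdot a M) (vOdot b M) := by
  funext j
  unfold vOdot vSup
  rw [← Finset.sup_sup]
  refine Finset.sup_congr rfl fun k _ => ?_
  exact Monotone.map_sup (f := fun z => z * M k j) (fun u v h => mul_le_mul_left h (M k j)) _ _

lemma vOdot_kleene (Z : Fin d → NNReal) (C : Matrix (Fin d) (Fin d) NNReal) (j : Fin d) :
    vOdot Z (kleene C) j = (Finset.range d).sup fun k => vOdot Z (mPow C k) j := by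
  unfold vOdot kleene
  simp only [Matrix.of_apply]
  rw [← Finset.sup_comm]
  refine Finset.sup_congr rfl fun k _ => ?_
  rw [sup_mul_left']

lemma vOdot_rangeSup (n : ℕ) (g : ℕ → Fin d → NNReal) (M : Matrix (Fin d) (Fin d) NNReal)
    (j : Fin d) :
    vOdot (fun i => (Finset.range n).sup fun k => g k i) M j
      = (Finset.range n).sup fun k => vOdot (g k) M j := by
  unfold vOdot
  rw [← Finset.sup_comm]
  refine Finset.sup_congr rfl fun k _ => ?_
  rw [sup_mul_right']

end helpers

/-- `X := Z ⊙ B` is the unique solution of the max-linear SEM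
`X = X ⊙ C ∨ Z`, where `B` is the Kleene star of the (nilpotent) edge weight
matrix `C` of a DAG. -/
theorem sem_unique_solution (d : ℕ) (C : Matrix (Fin d) (Fin d) NNReal)
    (Z : Fin d → NNReal) (hZ : ∀ i, 0 < Z i) (hnilp : mPow C d = 0) :
    vSup (vOdot (vOdot Z (kleene C)) C) Z = vOdot Z (kleene C) ∧
    ∀ X : Fin d → NNReal, vSup (vOdot X C) Z = X → X = vOdot Z (kleene C) := by
  set W : ℕ → Fin d → NNReal := fun n => vOdot Z (mPow C n) with hWdef
  have hW0 : W 0 = Z := vOdot_one Z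
  have hWd : W d = 0 := by
    show vOdot Z (mPow C d) = 0
    rw [hnilp]; exact vOdot_zero Z
  have hB : ∀ j, vOdot Z (kleene C) j = (Finset.range d).sup fun k => W k j :=
    vOdot_kleene Z C
  have hBfun : vOdot Z (kleene C) = fun i => (Finset.range d).sup fun k => W k i :=
    funext hB
  constructor
  · funext j
    show vOdot (vOdot Z (kleene C)) C j ⊔ Z j = vOdot Z (kleene C) j
    have h1 : vOdot (vOdot Z (kleene C)) C j
        = (Finset.range d).sup fun k => W (k + 1) j := by
      rw [hBfun, vOdot_rangeSup]
      refine Finset.sup_congr rfl fun k _ => ?_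
      show vOdot (vOdot Z (mPow C k)) C j = W (k + 1) j
      rw [vOdot_assoc]; rfl
    have h0 : Z j = W 0 j := by rw [hW0]
    rw [h1, h0, sup_shift d (fun k => W k j), hB j, Finset.range_add_one,
      Finset.sup_insert, hWd]
    simp
  · intro X hX
    have hXeq : ∀ j, X j = vOdot X C j ⊔ Z j := fun j => (congrFun hX j).symm
    have key : ∀ n, X = fun j => vOdot X (mPow C n) j ⊔ (Finset.range n).sup fun k => W k j := by
      intro n
      induction n with
      | zero =>
        funext j
        have : vOdot X (mPow C 0) j = X j := congrFun (vOdot_one X) j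
        simp [this]
      | succ n ih =>
        funext j
        have hXC : vOdot X C j = vOdot X (mPow C (n + 1)) j
            ⊔ (Finset.range n).sup fun k => W (k + 1) j := by
          conv_lhs => rw [ih]
          have : (fun j => vOdot X (mPow C n) j ⊔ (Finset.range n).sup fun k => W k j)
              = vSup (vOdot X (mPow C n)) (fun i => (Finset.range n).sup fun k => W k i) := rfl
          rw [this, vOdot_vSup]
          show vOdot (vOdot X (mPow C n)) C j
              ⊔ vOdot (fun i => (Finset.range n).sup fun k => W k i) C j = _
          rw [vOdot_assoc, vOdot_rangeSup]
          congr 1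
          refine Finset.sup_congr rfl fun k _ => ?_
          show vOdot (vOdot Z (mPow C k)) C j = W (k + 1) j
          rw [vOdot_assoc]; rfl
        rw [hXeq j, hXC, sup_assoc]
        congr 1
        have h0 : Z j = W 0 j := by rw [hW0]
        rw [h0, sup_shift n (fun k => W k j)]
    funext j
    rw [congrFun (key d) j]
    have : vOdot X (mPow C d) j = 0 := by rw [hnilp, vOdot_zero]; rfl
    rw [this, hB j]
    simp
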